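/- Let f ∈ C¹(ℝ²,ℝ) satisfy |f(u,v)| ≤ L₀ for all (u,v) ∈ [-M,M]², y·f(0,y) < 0 for all y ≠ 0, ∂₂f(0,0) < 0, and u·f(u,v) < 0 whenever |u| ≥ max(M,|v|). Let a : [-M,M] → ℝ be Lipschitz continuous with a(ξ) ≥ 1/K for all ξ ∈ [-M,M]. Let x : ℝ → (-M,M) be differentiable and η : ℝ → ℝ satisfy η(t) < t, ∫_{η(t)}^{t} a(x(s)) ds = 1, and x′(t) = f(x(t), x(η(t))) for all t ∈ ℝ. If there exists σ ∈ [η(0), 0] such that x(ηᵏ(σ)) = 0 for every integer k ≥ 0 (where ηᵏ denotes the k-th iterate of η, η⁰(σ) = σ), then x(t) = 0 for all t ∈ ℝ. -/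

import Mathlib

open Set Topology Filter

lemma aux_lip_bound (M : ℝ) (hM : 0 < M) (f : ℝ → ℝ → ℝ)
    (hf : ContDiff ℝ 1 (Function.uncurry f)) (hf00 : f 0 0 = 0) :
    ∃ C : ℝ, 0 < C ∧ ∀ p ∈ Icc (-M) M, ∀ q ∈ Icc (-M) M, |f p q| ≤ C * (|p| + |q|) := by
  set S : Set (ℝ × ℝ) := Icc (-M) M ×ˢ Icc (-M) M with hS
  have hS_conv : Convex ℝ S := (convex_Icc _ _).prod (convex_Icc _ _)
  have hS_comp : IsCompact S := isCompact_Icc.prod isCompact_Icc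
  have hdiff : ∀ z ∈ S, DifferentiableAt ℝ (Function.uncurry f) z :=
    fun z _ => (hf.differentiable one_ne_zero).differentiableAt
  obtain ⟨C₀, hC₀⟩ := hS_comp.exists_bound_of_continuousOn
    ((hf.continuous_fderiv one_ne_zero).continuousOn (s := S))
  have hlip : LipschitzOnWith (Real.toNNReal C₀) (Function.uncurry f) S := by
    refine hS_conv.lipschitzOnWith_of_nnnorm_fderiv_le hdiff (fun z hz => ?_)
    have h1 := hC₀ z hz
    have h2 : ‖fderiv ℝ (Function.uncurry f) z‖ ≤ (Real.toNNReal C₀ : ℝ) := by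
      refine h1.trans ?_
      rw [Real.coe_toNNReal']
      exact le_max_left _ _
    exact_mod_cast h2
  have h0 : (0:ℝ) ∈ Icc (-M) M := ⟨by linarith, by linarith⟩
  refine ⟨(Real.toNNReal C₀ : ℝ) + 1, by positivity, ?_⟩
  intro p hp q hq
  have h1 := hlip.dist_le_mul (p, q) (mk_mem_prod hp hq) (0, 0) (mk_mem_prod h0 h0)
  have h2 : dist (Function.uncurry f (p, q)) (Function.uncurry f (0, 0)) = |f p q| := by
    simp [Function.uncurry, Real.dist_eq, hf00]
  have h3 : dist ((p, q) : ℝ × ℝ) (0, 0) = max |p| |q| := by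
    simp [Prod.dist_eq, Real.dist_eq, Prod.norm_def, Real.norm_eq_abs]
  rw [h2, h3] at h1
  have h4 : max |p| |q| ≤ |p| + |q| :=
    max_le (le_add_of_nonneg_right (abs_nonneg _)) (le_add_of_nonneg_left (abs_nonneg _))
  have h5 : (0:ℝ) ≤ (Real.toNNReal C₀ : ℝ) := (Real.toNNReal C₀).coe_nonneg
  nlinarith [abs_nonneg p, abs_nonneg q, abs_nonneg (f p q)]

/-- For the state-dependent delay equation `x′(t) = f(x(t), x(η(t)))` with
threshold-type delay `∫_{η(t)}^t a(x(s)) ds = 1`: if along an entire solution `x`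
there is a point `σ ∈ [η(0),0]` all of whose backward iterates `ηᵏ(σ)` are zeros of
`x`, then `x` is identically zero. -/
theorem threshold_delay_iterated_zeros_imply_zero
    (K M L₀ : ℝ) (hK : 0 < K) (hM : 0 < M) (hL₀ : 0 < L₀)
    (f : ℝ → ℝ → ℝ) (hf : ContDiff ℝ 1 (Function.uncurry f))
    (hf_bdd : ∀ u ∈ Icc (-M) M, ∀ v ∈ Icc (-M) M, |f u v| ≤ L₀)
    (hf_neg : ∀ y : ℝ, y ≠ 0 → y * f 0 y < 0)
    (hf_d2 : deriv (fun y => f 0 y) 0 < 0)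
    (hf_dissip : ∀ u v : ℝ, max M |v| ≤ |u| → u * f u v < 0)
    (a : ℝ → ℝ)
    (ha_lip : ∃ La : ℝ, 0 ≤ La ∧ ∀ ξ ∈ Icc (-M) M, ∀ ζ ∈ Icc (-M) M,
      |a ξ - a ζ| ≤ La * |ξ - ζ|)
    (ha_lb : ∀ ξ ∈ Icc (-M) M, 1 / K ≤ a ξ)
    (x : ℝ → ℝ) (hx_range : ∀ t, x t ∈ Ioo (-M) M)
    (η : ℝ → ℝ)
    (hη_lt : ∀ t, η t < t)
    (hη_int : ∀ t, (∫ s in (η t)..t, a (x s)) = 1)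
    (hx_ode : ∀ t, HasDerivAt x (f (x t) (x (η t))) t)
    (σ : ℝ) (hσ : σ ∈ Icc (η 0) 0)
    (hzero : ∀ k : ℕ, x (η^[k] σ) = 0) :
    ∀ t : ℝ, x t = 0 := by
  obtain ⟨La, hLa0, hLa⟩ := ha_lip
  have hx_mem : ∀ t, x t ∈ Icc (-M) M := fun t => Ioo_subset_Icc_self (hx_range t)
  have h0mem : (0:ℝ) ∈ Icc (-M) M := ⟨by linarith, by linarith⟩
  have hxM : ∀ t, |x t| ≤ M := fun t => abs_le.2 (hx_mem t)
  -- continuity of x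
  have hx_cont : Continuous x := by
    rw [continuous_iff_continuousAt]
    exact fun t => (hx_ode t).continuousAt
  -- continuity of a ∘ x
  have ha_lipOn : LipschitzOnWith (Real.toNNReal La) a (Icc (-M) M) := by
    refine lipschitzOnWith_iff_dist_le_mul.2 (fun ξ hξ ζ hζ => ?_)
    rw [Real.dist_eq, Real.dist_eq]
    refine (hLa ξ hξ ζ hζ).trans ?_
    exact mul_le_mul_of_nonneg_right (Real.le_coe_toNNReal La) (abs_nonneg _)
  have hax_cont : Continuous fun s => a (x s) :=
    ha_lipOn.continuousOn.comp_continuous hx_cont hx_mem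
  -- bounds on a ∘ x
  have hK' : (0:ℝ) < 1 / K := by positivity
  set A : ℝ := a 0 + La * M with hAdef
  have hA_pos : 0 < A := by
    have h1 := ha_lb 0 h0mem
    have h2 : 0 ≤ La * M := by positivity
    simp only [hAdef]; linarith
  have hax_le : ∀ s, a (x s) ≤ A := by
    intro s
    have h1 := hLa (x s) (hx_mem s) 0 h0mem
    have h2 : a (x s) - a 0 ≤ La * |x s - 0| := (le_abs_self _).trans h1
    have h3 : La * |x s - 0| ≤ La * M := by
      rw [sub_zero]; exact mul_le_mul_of_nonneg_left (hxM s) hLa0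
    simp only [hAdef]; linarith
  have hax_ge : ∀ s, 1 / K ≤ a (x s) := fun s => ha_lb _ (hx_mem s)
  -- integrability
  have hint : ∀ c d : ℝ, IntervalIntegrable (fun s => a (x s)) MeasureTheory.volume c d :=
    fun c d => hax_cont.intervalIntegrable c d
  -- the "time change" u
  set u : ℝ → ℝ := fun t => ∫ s in (0:ℝ)..t, a (x s) with hu
  have hu_sub : ∀ c d : ℝ, u d - u c = ∫ s in c..d, a (x s) := fun c d =>
    intervalIntegral.integral_interval_sub_left (hint 0 d) (hint 0 c)
  have hu_incr_le : ∀ c d : ℝ, c ≤ d → u d - u c ≤ A * (d - c) := by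
    intro c d hcd
    rw [hu_sub]
    calc ∫ s in c..d, a (x s) ≤ ∫ _ in c..d, A :=
          intervalIntegral.integral_mono_on hcd (hint c d) intervalIntegrable_const
            (fun s _ => hax_le s)
      _ = A * (d - c) := by rw [intervalIntegral.integral_const, smul_eq_mul]; ring
  have hu_incr_ge : ∀ c d : ℝ, c ≤ d → (d - c) / K ≤ u d - u c := by
    intro c d hcd
    rw [hu_sub]
    calc (d - c) / K = (d - c) * (1/K) := by ring
      _ = ∫ _ in c..d, (1/K : ℝ) := by rw [intervalIntegral.integral_const, smul_eq_mul]
      _ ≤ ∫ s in c..d, a (x s) :=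
          intervalIntegral.integral_mono_on hcd intervalIntegrable_const (hint c d)
            (fun s _ => hax_ge s)
  -- u(η t) = u t - 1
  have huη : ∀ t, u (η t) = u t - 1 := by
    intro t
    have h1 := hu_sub (η t) t
    rw [hη_int t] at h1
    linarith
  have huηk : ∀ (k : ℕ) (t : ℝ), u (η^[k] t) = u t - k := by
    intro k
    induction k with
    | zero => simp
    | succ k ih =>
      intro t
      rw [Function.iterate_succ_apply', huη, ih]
      push_cast; ring
  -- η monotone, bi-Lipschitz
  have hη_mono : Monotone η := by
    intro c d hcd
    by_contra hlt
    push_neg at hlt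
    have h1 := hu_incr_ge (η d) (η c) hlt.le
    have h2 := hu_incr_ge c d hcd
    rw [huη, huη] at h1
    have h3 : 0 < (η c - η d) / K := div_pos (by linarith) hK
    have h4 : 0 ≤ (d - c) / K := div_nonneg (by linarith) hK.le
    linarith
  have hη_le : ∀ c d, c ≤ d → η d - η c ≤ (K * A) * (d - c) := by
    intro c d hcd
    have h1 := hu_incr_ge (η c) (η d) (hη_mono hcd)
    have h2 := hu_incr_le c d hcd
    rw [huη, huη] at h1
    rw [div_le_iff₀ hK] at h1
    nlinarith
  have hη_ge : ∀ c d, c ≤ d → (d - c) / (K * A) ≤ η d - η c := by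
    intro c d hcd
    have h1 := hu_incr_ge c d hcd
    have h2 := hu_incr_le (η c) (η d) (hη_mono hcd)
    rw [huη, huη] at h2
    rw [div_le_iff₀ hK] at h1
    rw [div_le_iff₀ (by positivity : (0:ℝ) < K * A)]
    nlinarith [hK, hA_pos]
  have hη_smono : StrictMono η := by
    intro c d hcd
    have h1 := hη_ge c d hcd.le
    have h2 : 0 < (d - c) / (K * A) := div_pos (by linarith) (by positivity)
    linarith
  have hη_cont : Continuous η := by
    have : LipschitzWith (Real.toNNReal (K * A)) η := by
      refine lipschitzWith_iff_dist_le_mul.2 (fun c d => ?_)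
      have hKA : K * A ≤ (Real.toNNReal (K * A) : ℝ) := Real.le_coe_toNNReal _
      have hKA0 : (0:ℝ) ≤ K * A := by positivity
      rcases le_total c d with h | h
      · rw [Real.dist_eq, Real.dist_eq, abs_of_nonpos (by linarith [hη_mono h] : η c - η d ≤ 0),
          abs_of_nonpos (by linarith : c - d ≤ 0)]
        have := hη_le c d h
        nlinarith [Real.toNNReal (K*A) |>.coe_nonneg]
      · rw [Real.dist_eq, Real.dist_eq, abs_of_nonneg (by linarith [hη_mono h] : 0 ≤ η c - η d),
          abs_of_nonneg (by linarith : 0 ≤ c - d)]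
        have := hη_le d c h
        nlinarith [Real.toNNReal (K*A) |>.coe_nonneg]
    exact this.continuous
  -- facts about f
  have hf_contF : Continuous (Function.uncurry f) := hf.continuous
  have hf_cont2 : Continuous fun y => f 0 y := by
    have : (fun y => f 0 y) = fun y => Function.uncurry f (0, y) := rfl
    rw [this]
    exact hf_contF.comp (continuous_const.prodMk continuous_id)
  have hf00 : f 0 0 = 0 := by
    by_contra hne
    rcases lt_or_gt_of_ne hne with hneg | hpos
    · have h1 : ∀ᶠ y in 𝓝 (0:ℝ), f 0 y < 0 :=
        hf_cont2.continuousAt.eventually_lt_const hneg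
      have h2 : ∀ᶠ y in 𝓝[<] (0:ℝ), f 0 y < 0 := h1.filter_mono nhdsWithin_le_nhds
      have h3 : ∀ᶠ y in 𝓝[<] (0:ℝ), y < 0 := eventually_mem_nhdsWithin
      obtain ⟨y, hy1, hy2⟩ := (h2.and h3).exists
      have := hf_neg y (ne_of_lt hy2)
      nlinarith
    · have h1 : ∀ᶠ y in 𝓝 (0:ℝ), 0 < f 0 y :=
        hf_cont2.continuousAt.eventually_const_lt hpos
      have h2 : ∀ᶠ y in 𝓝[>] (0:ℝ), 0 < f 0 y := h1.filter_mono nhdsWithin_le_nhds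
      have h3 : ∀ᶠ y in 𝓝[>] (0:ℝ), 0 < y := eventually_mem_nhdsWithin
      obtain ⟨y, hy1, hy2⟩ := (h2.and h3).exists
      have := hf_neg y (ne_of_gt hy2)
      nlinarith
  have hf_zero_iff : ∀ y, f 0 y = 0 → y = 0 := by
    intro y hy
    by_contra h
    have := hf_neg y h
    rw [hy, mul_zero] at this
    exact lt_irrefl 0 this
  obtain ⟨C, hC_pos, hC⟩ := aux_lip_bound M hM f hf hf00
  -- continuity/integrability of the derivative
  have hxd_cont : Continuous fun s => f (x s) (x (η s)) := by
    have : (fun s => f (x s) (x (η s))) = fun s => Function.uncurry f (x s, x (η s)) := rfl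
    rw [this]
    exact hf_contF.comp (hx_cont.prodMk (hx_cont.comp hη_cont))
  -- the step size and master lemma
  set κ : ℝ := K * A with hκdef
  have hκ_pos : 0 < κ := by positivity
  set h : ℝ := 1 / (8 * C * κ) with hhdef
  have hh_pos : 0 < h := by positivity
  -- Master lemma: if the whole backward orbit of z consists of zeros of x,
  -- then x vanishes on [z, z+h].
  have master : ∀ z : ℝ, (∀ k : ℕ, x (η^[k] z) = 0) → ∀ t ∈ Icc z (z + h), x t = 0 := by
    intro z hz
    have hwin_ord : ∀ k : ℕ, η^[k] z ≤ η^[k] (z + h) :=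
      fun k => (hη_mono.iterate k) (by linarith)
    have hwin_len : ∀ k : ℕ, η^[k] (z + h) - η^[k] z ≤ κ * h := by
      intro k
      have h1 : u (η^[k] (z + h)) - u (η^[k] z) = u (z + h) - u z := by
        rw [huηk, huηk]; ring
      have h2' := hu_incr_le z (z + h) (by linarith)
      have h2 : u (z + h) - u z ≤ A * h := by nlinarith
      have h4 := hu_incr_ge _ _ (hwin_ord k)
      rw [h1] at h4
      rw [div_le_iff₀ hK] at h4
      calc η^[k] (z + h) - η^[k] z ≤ (u (z + h) - u z) * K := h4
        _ ≤ (A * h) * K := by nlinarith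
        _ = κ * h := by rw [hκdef]; ring
    have key : ∀ n : ℕ, ∀ k : ℕ, ∀ t ∈ Icc (η^[k] z) (η^[k] (z + h)), |x t| ≤ M / 2 ^ n := by
      intro n
      induction n with
      | zero => intro k t _; simpa using hxM t
      | succ n ih =>
        intro k t ht
        obtain ⟨ht1, ht2⟩ := ht
        have hftc : ∫ s in (η^[k] z)..t, f (x s) (x (η s)) = x t - x (η^[k] z) :=
          intervalIntegral.integral_eq_sub_of_hasDerivAt (fun s _ => hx_ode s)
            (hxd_cont.intervalIntegrable _ _)
        rw [hz k, sub_zero] at hftc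
        have hbound : ∀ s ∈ Set.uIoc (η^[k] z) t, ‖f (x s) (x (η s))‖ ≤ C * (M / 2^n + M / 2^n) := by
          intro s hs
          rw [Set.uIoc_of_le ht1] at hs
          have hs' : s ∈ Icc (η^[k] z) (η^[k] (z + h)) := ⟨hs.1.le, hs.2.trans ht2⟩
          have h5 : |x s| ≤ M / 2^n := ih k s hs'
          have h6 : η s ∈ Icc (η^[k+1] z) (η^[k+1] (z + h)) := by
            rw [Function.iterate_succ_apply', Function.iterate_succ_apply']
            exact ⟨hη_mono hs'.1, hη_mono hs'.2⟩
          have h7 : |x (η s)| ≤ M / 2^n := ih (k+1) _ h6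
          have h8 := hC (x s) (hx_mem s) (x (η s)) (hx_mem (η s))
          have h9 : C * (|x s| + |x (η s)|) ≤ C * (M / 2^n + M / 2^n) := by nlinarith
          rw [Real.norm_eq_abs]
          exact h8.trans h9
        have h10 := intervalIntegral.norm_integral_le_of_norm_le_const hbound
        rw [hftc, Real.norm_eq_abs] at h10
        have h11 : |t - η^[k] z| ≤ κ * h := by
          rw [abs_of_nonneg (by linarith)]
          linarith [hwin_len k]
        have h12 : 0 ≤ C * (M / 2^n + M / 2^n) := by positivity
        have h13 : |x t| ≤ (C * (M / 2^n + M / 2^n)) * (κ * h) :=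
          h10.trans (mul_le_mul_of_nonneg_left h11 h12)
        have h14 : (C * (M / 2^n + M / 2^n)) * (κ * h) = M / 2^n * (1/4) := by
          rw [hhdef]
          field_simp
          ring
        have h15 : M / 2^(n+1) = (M / 2^n) / 2 := by rw [pow_succ, ← div_div]
        have h16 : 0 ≤ M / 2^n := by positivity
        rw [h14] at h13
        rw [h15]
        linarith
    intro t ht
    have h10 : ∀ n : ℕ, |x t| ≤ M / 2^n := fun n => key n 0 t (by simpa using ht)
    have h11 : Filter.Tendsto (fun n : ℕ => M / 2^n) Filter.atTop (𝓝 0) := by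
      have hp := tendsto_pow_atTop_nhds_zero_of_lt_one
        (by norm_num : (0:ℝ) ≤ 1/2) (by norm_num : (1/2:ℝ) < 1)
      have heq : (fun n : ℕ => M / 2^n) = fun n : ℕ => M * (1/2)^n := by
        funext n; rw [div_pow, one_pow, mul_one_div]
      rw [heq]
      simpa using hp.const_mul M
    have h12 : |x t| ≤ 0 := ge_of_tendsto h11 (Filter.Eventually.of_forall h10)
    exact abs_eq_zero.mp (le_antisymm h12 (abs_nonneg _))
  -- zeros on the interior of an interval force zeros of x ∘ η there
  have interior_zero : ∀ c d t₀ : ℝ, (∀ s ∈ Ioo c d, x s = 0) → t₀ ∈ Ioo c d → x (η t₀) = 0 := by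
    intro c d t₀ hz' ht₀
    have hloc : x =ᶠ[𝓝 t₀] fun _ => (0:ℝ) := by
      filter_upwards [Ioo_mem_nhds ht₀.1 ht₀.2] with s hs using hz' s hs
    have h1 : HasDerivAt x 0 t₀ := (hasDerivAt_const t₀ (0:ℝ)).congr_of_eventuallyEq hloc
    have h2 : f (x t₀) (x (η t₀)) = 0 := (hx_ode t₀).unique h1
    rw [hz' t₀ ht₀] at h2
    exact hf_zero_iff _ h2
  -- if x vanishes on [z,e] and on the backward orbit of z, then it vanishes on
  -- the backward orbit of e
  have step_propagate : ∀ z e : ℝ, z < e → (∀ k, x (η^[k] z) = 0) →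
      (∀ t ∈ Icc z e, x t = 0) → ∀ k, x (η^[k] e) = 0 := by
    intro z e hze horb hz'
    suffices H : ∀ k, ∀ t ∈ Icc (η^[k] z) (η^[k] e), x t = 0 by
      intro k
      exact H k _ ⟨(hη_mono.iterate k) hze.le, le_refl _⟩
    intro k
    induction k with
    | zero => simpa using hz'
    | succ k ih =>
      intro w hw
      rw [Function.iterate_succ_apply', Function.iterate_succ_apply'] at hw
      have hord : η^[k] z < η^[k] e := (hη_smono.iterate k) hze
      have him : w ∈ η '' Icc (η^[k] z) (η^[k] e) :=
        intermediate_value_Icc hord.le hη_cont.continuousOn hw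
      obtain ⟨t, ht, hηt⟩ := him
      rcases eq_or_lt_of_le ht.2 with heq | hlt2
      · -- t is the right endpoint: use continuity from the left
        have hlim : Filter.Tendsto (fun s => x (η s)) (𝓝[<] (η^[k] e)) (𝓝 (x (η (η^[k] e)))) :=
          ((hx_cont.comp hη_cont).continuousAt (x := η^[k] e)).mono_left nhdsWithin_le_nhds
        have hev : (fun s => x (η s)) =ᶠ[𝓝[<] (η^[k] e)] fun _ => (0:ℝ) := by
          filter_upwards [Ioo_mem_nhdsLT_of_mem ⟨hord, le_refl _⟩] with s hs
          exact interior_zero _ _ s (fun t' ht' => ih t' (Ioo_subset_Icc_self ht')) hs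
        have hz2 : x (η (η^[k] e)) = 0 :=
          tendsto_nhds_unique (hlim.congr' hev) tendsto_const_nhds
        rw [← hηt, heq]
        exact hz2
      rcases eq_or_lt_of_le ht.1 with heq1 | hlt1
      · -- t is the left endpoint: use the orbit of z
        have h20 := horb (k+1)
        rw [Function.iterate_succ_apply'] at h20
        rw [← hηt, ← heq1]
        exact h20
      · -- t is interior
        rw [← hηt]
        exact interior_zero _ _ t (fun t' ht' => ih t' (Ioo_subset_Icc_self ht')) ⟨hlt1, hlt2⟩
  -- x vanishes on [z, ∞) whenever the whole backward orbit of z consists of zeros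
  have right_ray : ∀ z : ℝ, (∀ k, x (η^[k] z) = 0) → ∀ t, z ≤ t → x t = 0 := by
    intro z horb
    have main : ∀ n : ℕ, ∀ t ∈ Icc z (z + n * h), x t = 0 := by
      intro n
      induction n with
      | zero =>
        intro t ht
        have h1 : t = z := le_antisymm (by simpa using ht.2) ht.1
        rw [h1]
        simpa using horb 0
      | succ n ih =>
        have hzle : z ≤ z + (n:ℝ) * h := le_add_of_nonneg_right (by positivity)
        have he : ∀ k, x (η^[k] (z + (n:ℝ) * h)) = 0 := by
          rcases eq_or_lt_of_le hzle with heq | hlt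
          · rw [← heq]; exact horb
          · exact step_propagate z _ hlt horb ih
        intro t ht
        rcases le_total t (z + (n:ℝ) * h) with h1 | h1
        · exact ih t ⟨ht.1, h1⟩
        · refine master (z + (n:ℝ) * h) he t ⟨h1, ?_⟩
          have h2 := ht.2
          push_cast at h2 ⊢
          linarith
    intro t hzt
    obtain ⟨n, hn⟩ := exists_nat_ge ((t - z) / h)
    refine main n t ⟨hzt, ?_⟩
    rw [div_le_iff₀ hh_pos] at hn
    linarith
  -- propagate backwards along the orbit of σ
  have back : ∀ k : ℕ, ∀ t, η^[k] σ ≤ t → x t = 0 := by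
    intro k
    induction k with
    | zero => simpa using right_ray σ hzero
    | succ k ih =>
      intro w hw
      rw [Function.iterate_succ_apply'] at hw
      set b := η^[k] σ with hbdef
      set T : ℝ := b + (K * A) * ((w - η b) + 1) with hTdef
      have hwb : η b ≤ w := hw
      have hbT : b ≤ T := by
        have h1 : 0 ≤ (K * A) * ((w - η b) + 1) :=
          mul_nonneg (by positivity) (by linarith)
        rw [hTdef]; linarith
      have hwT : w ≤ η T := by
        have h5 := hη_ge b T hbT
        have h6 : (T - b) / (K * A) = (w - η b) + 1 := by
          rw [hTdef]
          field_simp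
          ring
        linarith
      have him : w ∈ η '' Icc b T :=
        intermediate_value_Icc hbT hη_cont.continuousOn ⟨hwb, hwT⟩
      obtain ⟨t, ht, hηt⟩ := him
      rcases eq_or_lt_of_le ht.1 with heq | hlt
      · have h20 := hzero (k+1)
        rw [Function.iterate_succ_apply'] at h20
        rw [← hηt, ← heq, hbdef]
        exact h20
      · have hloc : x =ᶠ[𝓝 t] fun _ => (0:ℝ) := by
          filter_upwards [Ioi_mem_nhds hlt] with s hs using ih s hs.le
        have h1 : HasDerivAt x 0 t := (hasDerivAt_const t (0:ℝ)).congr_of_eventuallyEq hloc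
        have h2 : f (x t) (x (η t)) = 0 := (hx_ode t).unique h1
        rw [ih t hlt.le] at h2
        rw [← hηt]
        exact hf_zero_iff _ h2
  -- conclude
  intro t
  have hgap : ∀ k : ℕ, η^[k] σ ≤ σ - k * (1 / A) := by
    intro k
    induction k with
    | zero => simp
    | succ k ih =>
      have hs := hη_lt (η^[k] σ)
      have h1 := hu_incr_le (η (η^[k] σ)) (η^[k] σ) hs.le
      rw [huη] at h1
      have h2 : 1 / A ≤ η^[k] σ - η (η^[k] σ) := by
        rw [div_le_iff₀ hA_pos]
        nlinarith
      rw [Function.iterate_succ_apply']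
      push_cast
      linarith
  obtain ⟨k, hk⟩ := exists_nat_ge (A * (σ - t))
  have h3 : σ - k * (1 / A) ≤ t := by
    have h5 : σ - t ≤ k * (1 / A) := by
      have h6 : σ - t = (A * (σ - t)) / A := by field_simp
      rw [h6, mul_one_div]
      gcongr
    linarith
  exact back k t (le_trans (hgap k) h3)
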